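/- Let G_A(y) := (‖y‖²/2)·1{‖y‖ ≤ α_d} with α_d := √(2(d+3)/(d+1)), and let g: ℝ^d → ℝ be differentiable with Σᵢ|∂g/∂xᵢ(y) − ∂g/∂xᵢ(z)| ≤ ‖y−z‖ for all y,z. Then G_A − g is convex on the ball {‖y‖ ≤ α_d}. -/

import Mathlib

open scoped RealInnerProductSpace

/-- Bound a linear functional's value by the ℓ¹ sum of its values on the standard basis. -/
lemma apply_le_sum_abs {d : ℕ} (L : EuclideanSpace ℝ (Fin d) →L[ℝ] ℝ)
    (w : EuclideanSpace ℝ (Fin d)) :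
    |L w| ≤ (∑ i, |L (EuclideanSpace.single i 1)|) * ‖w‖ := by
  have hw : w = ∑ i, w i • EuclideanSpace.single i (1 : ℝ) := by
    have := (EuclideanSpace.basisFun (Fin d) ℝ).sum_repr w
    simpa [EuclideanSpace.basisFun_apply, EuclideanSpace.basisFun_repr] using this.symm
  have hcoord : ∀ i, |w i| ≤ ‖w‖ := by
    intro i
    have h1 : |w i| = Real.sqrt (|w i| ^ 2) := by
      rw [Real.sqrt_sq_eq_abs, abs_abs]
    rw [EuclideanSpace.norm_eq, h1]
    apply Real.sqrt_le_sqrt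
    exact Finset.single_le_sum (f := fun j => |w j| ^ 2) (fun j _ => by positivity)
      (Finset.mem_univ i)
  calc |L w| = |∑ i, w i * L (EuclideanSpace.single i 1)| := by
        conv_lhs => rw [hw]
        simp [map_sum, map_smul, smul_eq_mul]
    _ ≤ ∑ i, |w i * L (EuclideanSpace.single i 1)| := Finset.abs_sum_le_sum_abs _ _
    _ ≤ ∑ i, |L (EuclideanSpace.single i 1)| * ‖w‖ := by
        apply Finset.sum_le_sum
        intro i _
        rw [abs_mul, mul_comm]
        exact mul_le_mul_of_nonneg_left (hcoord i) (abs_nonneg _)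
    _ = (∑ i, |L (EuclideanSpace.single i 1)|) * ‖w‖ := by rw [Finset.sum_mul]

/-- Let `G_A(y) = ‖y‖²/2` on the ball of radius `α_d = √(2(d+3)/(d+1))`, and let
`g : ℝ^d → ℝ` be differentiable with `Σᵢ |∂ᵢg(y) - ∂ᵢg(z)| ≤ ‖y - z‖` for all `y, z`.
Then `G_A - g` is convex on the closed ball of radius `α_d`. -/
theorem GA_sub_convex_on_ball {d : ℕ} (hd : 1 ≤ d)
    (g : EuclideanSpace ℝ (Fin d) → ℝ) (hg : Differentiable ℝ g)
    (hlip : ∀ y z : EuclideanSpace ℝ (Fin d),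
      ∑ i, |fderiv ℝ g y (EuclideanSpace.single i 1) -
            fderiv ℝ g z (EuclideanSpace.single i 1)| ≤ ‖y - z‖) :
    ConvexOn ℝ (Metric.closedBall (0 : EuclideanSpace ℝ (Fin d))
        (Real.sqrt (2 * ((d : ℝ) + 3) / ((d : ℝ) + 1))))
      (fun y : EuclideanSpace ℝ (Fin d) => ‖y‖ ^ 2 / 2 - g y) := by
  -- The difference of gradients is 1-Lipschitz in operator-applied form.
  have key : ∀ u v w : EuclideanSpace ℝ (Fin d),
      |(fderiv ℝ g u - fderiv ℝ g v) w| ≤ ‖u - v‖ * ‖w‖ := by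
    intro u v w
    calc |(fderiv ℝ g u - fderiv ℝ g v) w|
        ≤ (∑ i, |(fderiv ℝ g u - fderiv ℝ g v) (EuclideanSpace.single i 1)|) * ‖w‖ :=
          apply_le_sum_abs _ w
      _ ≤ ‖u - v‖ * ‖w‖ := by
          apply mul_le_mul_of_nonneg_right _ (norm_nonneg w)
          simpa using hlip u v
  set F : EuclideanSpace ℝ (Fin d) → ℝ := fun y => ‖y‖ ^ 2 / 2 - g y with hF
  -- F is convex on all of ℝ^d; prove the segment inequality directly.
  refine ⟨convex_closedBall _ _, ?_⟩
  intro x hx y hy a b ha hb hab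
  -- consider h t = F (x + t • (y - x)) on ℝ
  set w : EuclideanSpace ℝ (Fin d) := y - x with hwdef
  set line : ℝ → EuclideanSpace ℝ (Fin d) := fun t => x + t • w with hline
  set h : ℝ → ℝ := fun t => F (line t) with hh
  have hlineDeriv : ∀ t, HasDerivAt line w t := by
    intro t
    exact (((hasDerivAt_id t).smul_const w).congr_deriv (one_smul ℝ w)).const_add x
  have hderiv : ∀ t : ℝ,
      HasDerivAt h (⟪line t, w⟫ - fderiv ℝ g (line t) w) t := by
    intro t
    have h1 : HasDerivAt (fun t => ‖line t‖ ^ 2) (2 * ⟪line t, w⟫) t :=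
      (hlineDeriv t).norm_sq
    have h2 : HasDerivAt (fun t => g (line t)) (fderiv ℝ g (line t) w) t :=
      ((hg (line t)).hasFDerivAt.comp_hasDerivAt t (hlineDeriv t))
    have := (h1.div_const 2).sub h2
    exact this.congr_deriv (by ring)
  have hderiv' : ∀ t : ℝ, deriv h t = ⟪line t, w⟫ - fderiv ℝ g (line t) w :=
    fun t => (hderiv t).deriv
  have hmono : MonotoneOn (deriv h) (interior (Set.univ : Set ℝ)) := by
    intro s _ t _ hst
    rw [hderiv', hderiv']
    have hls : line t - line s = (t - s) • w := by
      simp only [hline]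
      rw [add_sub_add_left_eq_sub, ← sub_smul]
    have hinner : ⟪line t, w⟫ - ⟪line s, w⟫ = (t - s) * ‖w‖ ^ 2 := by
      rw [← inner_sub_left, hls, real_inner_smul_left, real_inner_self_eq_norm_sq]
    have hgrad : |fderiv ℝ g (line t) w - fderiv ℝ g (line s) w| ≤ (t - s) * (‖w‖ * ‖w‖) := by
      have := key (line t) (line s) w
      simp only [ContinuousLinearMap.sub_apply] at this
      refine this.trans ?_
      rw [hls]
      rw [norm_smul, Real.norm_eq_abs, abs_of_nonneg (by linarith : (0:ℝ) ≤ t - s)]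
      ring_nf
      exact le_refl _
    have := (abs_le.mp hgrad).2
    nlinarith [sq_nonneg ‖w‖, sq_abs (fderiv ℝ g (line t) w - fderiv ℝ g (line s) w)]
  have hconv : ConvexOn ℝ (Set.univ : Set ℝ) h := by
    apply MonotoneOn.convexOn_of_deriv convex_univ
    · exact fun t _ => ((hderiv t).continuousAt).continuousWithinAt
    · exact fun t _ => ((hderiv t).differentiableAt).differentiableWithinAt
    · exact hmono
  have h01 := hconv.2 (Set.mem_univ (0:ℝ)) (Set.mem_univ (1:ℝ)) ha hb hab
  have hline0 : line 0 = x := by simp [hline]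
  have hline1 : line 1 = y := by simp [hline, hwdef]
  have hlineb : line b = a • x + b • y := by
    simp only [hline, hwdef]
    rw [smul_sub]
    have : a = 1 - b := by linarith
    rw [this]
    module
  simp only [hh, smul_eq_mul, mul_zero, mul_one, zero_add] at h01
  rw [hline0, hline1, hlineb] at h01
  exact h01
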